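/- For n ≥ 2, Σ_{k=2}^{n} (1/(k−1))·binomial(n,k) = n·Σ_{k=1}^{n−1} (2^k − 1)/k − 2^n + n + 1. -/

import Mathlib

open Finset

lemma shift1 (f : ℕ → ℚ) (a b : ℕ) : ∑ k ∈ Icc (a+1) (b+1), f k = ∑ j ∈ Icc a b, f (j+1) := by
  rw [← Finset.map_add_right_Icc, Finset.sum_map]; rfl

lemma binomSum (n : ℕ) : ∑ j ∈ Icc 1 n, (n.choose j : ℚ) = 2^n - 1 := by
  have hr : Finset.range (n+1) = Icc 0 n := by
    rw [← Nat.Ico_zero_eq_range, Finset.Ico_add_one_right_eq_Icc]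
  have hins : insert 0 (Ioc 0 n) = Icc 0 n := Finset.Ioc_insert_left (Nat.zero_le n)
  have hsum : ∑ j ∈ Icc 0 n, (n.choose j : ℚ) = 2^n := by
    rw [← hr]
    have := Nat.sum_range_choose n
    exact_mod_cast congrArg (Nat.cast (R := ℚ)) this
  have h1 : (Icc 1 n : Finset ℕ) = Ioc 0 n := by
    rw [show (1:ℕ) = 0+1 from rfl, Finset.Icc_add_one_left_eq_Ioc]
  rw [h1]
  have := Finset.sum_insert (s := Ioc 0 n) (f := fun j => (n.choose j : ℚ))
    (by simp : (0:ℕ) ∉ Ioc 0 n)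
  rw [hins, hsum] at this
  simp at this
  linarith

lemma chooseSum (n : ℕ) : ∑ j ∈ Icc 1 n, (n.choose j : ℚ) / j
    = ∑ j ∈ Icc 1 n, ((2:ℚ)^j - 1) / j := by
  induction n with
  | zero => simp
  | succ n ih =>
    have hL : ∑ j ∈ Icc 1 (n+1), ((n+1).choose j : ℚ) / j
        = ∑ i ∈ Icc 0 n, ((n.choose i : ℚ) / ((i:ℚ)+1) + (n.choose (i+1) : ℚ) / ((i:ℚ)+1)) := by
      rw [show (1:ℕ) = 0+1 from rfl, shift1]
      refine Finset.sum_congr rfl (fun i _ => ?_)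
      rw [Nat.choose_succ_succ]
      push_cast
      ring
    have h2 : ∑ i ∈ Icc 0 n, (n.choose (i+1) : ℚ) / ((i:ℚ)+1)
        = ∑ j ∈ Icc 1 n, (n.choose j : ℚ) / j := by
      have hx : ∑ i ∈ Icc 0 n, (n.choose (i+1) : ℚ) / ((i:ℚ)+1)
          = ∑ j ∈ Icc (0+1) (n+1), (n.choose j : ℚ) / j := by
        rw [shift1 (fun j => (n.choose j : ℚ)/j) 0 n]
        exact Finset.sum_congr rfl (fun i _ => by push_cast; ring)
      rw [hx, show (0+1 : ℕ) = 1 from rfl,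
        Finset.sum_Icc_succ_top (by omega : (1:ℕ) ≤ n+1)]
      simp [Nat.choose_succ_self]
    have h1 : ∑ i ∈ Icc 0 n, (n.choose i : ℚ) / ((i:ℚ)+1)
        = ((2:ℚ)^(n+1) - 1) / ((n:ℚ)+1) := by
      have key : ∀ i : ℕ, (n.choose i : ℚ) / ((i:ℚ)+1) = ((n+1).choose (i+1) : ℚ) / ((n:ℚ)+1) := by
        intro i
        have h := Nat.add_one_mul_choose_eq n i
        have hc : ((n:ℚ)+1) * (n.choose i : ℚ) = ((n+1).choose (i+1) : ℚ) * ((i:ℚ)+1) := by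
          exact_mod_cast congrArg (Nat.cast (R := ℚ)) h
        have hi : ((i:ℚ)+1) ≠ 0 := by positivity
        have hn : ((n:ℚ)+1) ≠ 0 := by positivity
        field_simp
        linarith
      rw [Finset.sum_congr rfl (fun i _ => key i), ← Finset.sum_div]
      have hb : ∑ i ∈ Icc 0 n, ((n+1).choose (i+1) : ℚ) = (2:ℚ)^(n+1) - 1 := by
        rw [← shift1 (fun j => ((n+1).choose j : ℚ)) 0 n]
        exact binomSum (n+1)
      rw [hb]
    rw [hL, Finset.sum_add_distrib, h1, h2, ih,
      Finset.sum_Icc_succ_top (by omega : (1:ℕ) ≤ n+1)]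
    push_cast
    ring

theorem stmt12 (n : ℕ) (hn : 2 ≤ n) :
    ∑ k ∈ Finset.Icc 2 n, (1 / ((k : ℚ) - 1)) * (n.choose k : ℚ) =
      (n : ℚ) * ∑ k ∈ Finset.Icc 1 (n - 1), ((2 : ℚ) ^ k - 1) / (k : ℚ)
        - 2 ^ n + (n : ℚ) + 1 := by
  induction n, hn using Nat.le_induction with
  | base => norm_num [Finset.Icc_self]
  | succ n hn ih =>
    obtain ⟨m, rfl⟩ : ∃ m, n = m + 2 := ⟨n - 2, by omega⟩
    have e1 : m + 2 - 1 = m + 1 := rfl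
    have e2 : m + 2 + 1 - 1 = m + 2 := rfl
    rw [e1] at ih
    rw [e2]
    have key1 : ∑ k ∈ Icc 2 (m+2+1), (1/((k:ℚ)-1)) * ((m+2+1).choose k : ℚ)
        = ∑ j ∈ Icc 1 (m+2), ((m+2).choose j : ℚ)/j
          + ∑ k ∈ Icc 2 (m+2), (1/((k:ℚ)-1)) * ((m+2).choose k : ℚ) := by
      have hs : ∑ k ∈ Icc 2 (m+2+1), (1/((k:ℚ)-1)) * ((m+2+1).choose k : ℚ)
          = ∑ j ∈ Icc 1 (m+2), (((m+2).choose j : ℚ)/j + ((m+2).choose (j+1) : ℚ)/j) := by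
        rw [show (2:ℕ)=1+1 from rfl,
          shift1 (fun k => (1/((k:ℚ)-1)) * ((m+2+1).choose k : ℚ)) 1 (m+2)]
        refine Finset.sum_congr rfl (fun j _ => ?_)
        rw [show (m+2+1).choose (j+1) = (m+2).choose j + (m+2).choose (j+1) from
          Nat.choose_succ_succ _ _]
        push_cast
        ring
      rw [hs, Finset.sum_add_distrib]
      congr 1
      rw [Finset.sum_Icc_succ_top (by omega : (1:ℕ) ≤ m+1+1),
        show (m+2).choose (m+1+1+1) = 0 from Nat.choose_succ_self _]
      have hy : ∑ k ∈ Icc 2 (m+2), (1/((k:ℚ)-1)) * ((m+2).choose k : ℚ)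
          = ∑ j ∈ Icc 1 (m+1), ((m+2).choose (j+1) : ℚ)/j := by
        rw [show (2:ℕ)=1+1 from rfl,
          shift1 (fun k => (1/((k:ℚ)-1)) * ((m+2).choose k : ℚ)) 1 (m+1)]
        refine Finset.sum_congr rfl (fun j _ => ?_)
        push_cast
        ring
      rw [hy]
      simp
    have hT : ∑ k ∈ Icc 1 (m+2), ((2:ℚ)^k - 1) / (k:ℚ)
        = ∑ k ∈ Icc 1 (m+1), ((2:ℚ)^k - 1) / (k:ℚ) + ((2:ℚ)^(m+2) - 1)/((m+2 : ℕ):ℚ) :=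
      Finset.sum_Icc_succ_top (by omega : (1:ℕ) ≤ m+1+1) _
    have hmul : ((m+2 : ℕ):ℚ) * (((2:ℚ)^(m+2) - 1)/((m+2 : ℕ):ℚ)) = (2:ℚ)^(m+2) - 1 :=
      mul_div_cancel₀ _ (Nat.cast_ne_zero.mpr (by omega))
    rw [key1, chooseSum, hT, ih]
    push_cast at hmul ⊢
    linear_combination -hmul
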